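/- Let X₀ be a proper subshift of X = 𝒜^(ℤ^d), let μ be an ergodic shift-invariant Borel probability measure on X with μ(X₀) = 0, and let μ̄ be a Borel probability measure on X × Y that is invariant and ergodic for the product ℤ^d-action T^j(x,y) = (σ^j x, T^j y) and whose marginals are μ on X and ν on Y. Then for μ̄-almost every (x, y), the following hold for every j ∈ ℤ^d: (i) the set N(x,y,j) = { n ≥ 0 : x|_{S_n(j,y)} ∈ L(X₀) } is finite; (ii) setting n(j) = max N(x,y,j) if N(x,y,j) ≠ ∅ and n(j) = 0 otherwise, the sets S_{n(j)}(j, y) (j ∈ ℤ^d) form a partition of ℤ^d, i.e., k ∈ S_{n(j)}(j, y) implies S_{n(k)}(k, y) = S_{n(j)}(j, y); (iii) if n(j) > 0 then x|_{S_{n(j)}(j,y)} ∈ L(X₀); (iv) x|_{S_{n(j)+1}(j,y)} ∉ L(X₀). -/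

import Mathlib

open MeasureTheory Filter Topology
open scoped ENNReal Classical

namespace Freezing

/-- The configuration space `X = 𝒜^(ℤ^d)`. -/
abbrev Cfg (d : ℕ) (A : Type) : Type := (Fin d → ℤ) → A

section Defs

variable {d : ℕ} {A : Type} [Fintype A] [TopologicalSpace A] [DiscreteTopology A]
  [MeasurableSpace A] [BorelSpace A]

/-- The shift action: `(σ^n x)_m = x_{n+m}`. -/
def shift (n : Fin d → ℤ) (x : Cfg d A) : Cfg d A := fun m => x (n + m)

/-- Shift-invariance of a measure. -/
def Invariant (μ : Measure (Cfg d A)) : Prop :=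
  ∀ n : Fin d → ℤ, Measure.map (shift n) μ = μ

/-- Cylinder set `[w]` for a pattern `w` on `E_n = ([0,n-1] ∩ ℤ)^d`. -/
def cylE (n : ℕ) (w : (Fin d → Fin n) → A) : Set (Cfg d A) :=
  { x | ∀ m : Fin d → Fin n, x (fun i => ((m i : ℕ) : ℤ)) = w m }

/-- Measure-theoretic entropy `h(μ) = inf_{n ≥ 1} n^{-d} Σ_w (-μ[w] log μ[w])`. -/
noncomputable def entropy (μ : Measure (Cfg d A)) : ℝ :=
  ⨅ n : {n : ℕ // 1 ≤ n},
    ((n.1 : ℝ) ^ d)⁻¹ *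
      ∑ w : (Fin d → Fin n.1) → A, Real.negMulLog (μ (cylE n.1 w)).toReal

/-- Pressure `p_φ(β) = sup { h(μ) + β ∫ φ dμ }` over shift-invariant probability measures. -/
noncomputable def pressure (φ : Cfg d A → ℝ) (β : ℝ) : ℝ :=
  sSup { r | ∃ μ : Measure (Cfg d A), IsProbabilityMeasure μ ∧ Invariant μ ∧
    r = entropy μ + β * ∫ x, φ x ∂μ }

/-- The set of equilibrium states of `βφ`. -/
def ES (φ : Cfg d A → ℝ) (β : ℝ) : Set (Measure (Cfg d A)) :=
  { μ | IsProbabilityMeasure μ ∧ Invariant μ ∧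
      entropy μ + β * ∫ x, φ x ∂μ = pressure φ β }

/-- `φ` has a freezing phase transition at `βc`. -/
def FreezingPT (φ : Cfg d A → ℝ) (βc : ℝ) : Prop :=
  (∀ β β' : ℝ, βc < β → βc < β' → ES φ β = ES φ β') ∧
  (∀ β β' : ℝ, β < βc → βc < β' → ES φ β ≠ ES φ β')

/-- `s_φ = sup { ∫ φ dμ }` over shift-invariant probability measures. -/
noncomputable def sPhi (φ : Cfg d A → ℝ) : ℝ :=
  sSup { r | ∃ μ : Measure (Cfg d A), IsProbabilityMeasure μ ∧ Invariant μ ∧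
    r = ∫ x, φ x ∂μ }

/-- The set of maximizing measures of `φ`. -/
def MM (φ : Cfg d A → ℝ) : Set (Measure (Cfg d A)) :=
  { μ | IsProbabilityMeasure μ ∧ Invariant μ ∧ (∫ x, φ x ∂μ) = sPhi φ }

/-- `h_φ = sup { h(η) : η ∈ MM(φ) }`. -/
noncomputable def hPhi (φ : Cfg d A → ℝ) : ℝ :=
  sSup { r | ∃ μ ∈ MM φ, r = entropy μ }

/-- The zero-temperature accumulation points of `φ`. -/
def ZTA (φ : Cfg d A → ℝ) : Set (Measure (Cfg d A)) :=
  { μ | IsProbabilityMeasure μ ∧ Invariant μ ∧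
      ∃ (β : ℕ → ℝ) (μs : ℕ → Measure (Cfg d A)),
        Tendsto β atTop atTop ∧ (∀ k, μs k ∈ ES φ (β k)) ∧
        ∀ f : Cfg d A → ℝ, Continuous f →
          Tendsto (fun k => ∫ x, f x ∂(μs k)) atTop (𝓝 (∫ x, f x ∂μ)) }

/-- A subshift: nonempty, closed, invariant under every shift. -/
def IsSubshift (X₀ : Set (Cfg d A)) : Prop :=
  X₀.Nonempty ∧ IsClosed X₀ ∧ ∀ n : Fin d → ℤ, ∀ x ∈ X₀, shift n x ∈ X₀

/-- The language `L_{E_n}(X₀)`: patterns on `E_n` appearing at the origin of points of `X₀`. -/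
def langE (X₀ : Set (Cfg d A)) (n : ℕ) : Set ((Fin d → Fin n) → A) :=
  { w | ∃ x ∈ X₀, ∀ m : Fin d → Fin n, x (fun i => ((m i : ℕ) : ℤ)) = w m }

/-- Topological entropy `h_top(X₀) = inf_{n ≥ 1} n^{-d} log |L_{E_n}(X₀)|`. -/
noncomputable def topEnt (X₀ : Set (Cfg d A)) : ℝ :=
  ⨅ n : {n : ℕ // 1 ≤ n}, ((n.1 : ℝ) ^ d)⁻¹ * Real.log ((langE X₀ n.1).ncard)

/-- A measure of maximal entropy on the subshift `X₀`. -/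
def IsMME (X₀ : Set (Cfg d A)) (μ : Measure (Cfg d A)) : Prop :=
  IsProbabilityMeasure μ ∧ Invariant μ ∧ μ X₀ = 1 ∧ entropy μ = topEnt X₀

/-- Ergodicity: invariant Borel sets have measure `0` or `1`. -/
def ErgodicInv (μ : Measure (Cfg d A)) : Prop :=
  ∀ s : Set (Cfg d A), MeasurableSet s → (∀ n : Fin d → ℤ, shift n ⁻¹' s = s) →
    μ s = 0 ∨ μ s = 1

/-- The `n`-th variation `var_n φ`, over pairs agreeing on `B_n = ([-n,n] ∩ ℤ)^d`. -/
noncomputable def varPot (φ : Cfg d A → ℝ) (n : ℕ) : ℝ :=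
  sSup { r | ∃ x y : Cfg d A,
    (∀ m : Fin d → ℤ, (∀ i, |m i| ≤ (n : ℤ)) → x m = y m) ∧ r = |φ x - φ y| }

/-- Sup-norm `‖m‖_∞` of a site `m ∈ ℤ^d`. -/
def supNorm (m : Fin d → ℤ) : ℕ := Finset.univ.sup fun i => (m i).natAbs

/-- The metric `dist(x,y) = 2^{-min{‖n‖_∞ : x_n ≠ y_n}}`. -/
noncomputable def cfgDist (x y : Cfg d A) : ℝ :=
  if x = y then 0
  else (2 : ℝ) ^
    (-((sInf { k : ℕ | ∃ m : Fin d → ℤ, supNorm m = k ∧ x m ≠ y m } : ℕ) : ℤ))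

/-- Distance from a point to a subshift. -/
noncomputable def distToSub (X₀ : Set (Cfg d A)) (x : Cfg d A) : ℝ :=
  sInf { r | ∃ y ∈ X₀, r = cfgDist x y }

end Defs


section Odometer

/-- The dyadic odometer `ι` on `Σ = {0,1}^ℕ`: binary addition of `1` with carry to the left
(the bit at `n` flips exactly when all lower bits equal `1`); the all-ones sequence is sent to
the all-zeros sequence. -/
def iota (y : ℕ → Bool) : ℕ → Bool :=
  fun n => xor (y n) (decide (∀ k < n, y k = true))

/-- The inverse of the dyadic odometer: binary subtraction of `1` with borrow (the bit at `n`
flips exactly when all lower bits equal `0`); the all-zeros sequence is sent to the all-ones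
sequence. -/
def iotaInv (y : ℕ → Bool) : ℕ → Bool :=
  fun n => xor (y n) (decide (∀ k < n, y k = false))

/-- The iterate `ι^i` of the odometer, for `i ∈ ℤ` (using that `iotaInv` is the inverse
bijection of `iota`). -/
def odoIter (i : ℤ) (y : ℕ → Bool) : ℕ → Bool :=
  if 0 ≤ i then iota^[i.toNat] y else iotaInv^[(-i).toNat] y

/-- The relation `i ∼_{n,y} k`: the sequences `ι^i(y)` and `ι^k(y)` agree in all coordinates
at level `n` and above. -/
def simRel (n : ℕ) (y : ℕ → Bool) (i k : ℤ) : Prop :=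
  ∀ m : ℕ, n ≤ m → odoIter i y m = odoIter k y m

/-- The `ℤ^d`-dyadic odometer space `Y = Σ^d`. -/
abbrev OdoY (d : ℕ) : Type := Fin d → ℕ → Bool

/-- The `ℤ^d`-action on `Y`: `T^j(y₁,…,y_d) = (ι^{j₁}(y₁),…,ι^{j_d}(y_d))`. -/
def odoAct {d : ℕ} (j : Fin d → ℤ) (y : OdoY d) : OdoY d := fun i => odoIter (j i) (y i)

/-- The dyadic tile `S_n(j,y) = { k ∈ ℤ^d : j_i ∼_{n,y_i} k_i for each i }`. -/
def dyadicTile {d : ℕ} (n : ℕ) (j : Fin d → ℤ) (y : OdoY d) : Set (Fin d → ℤ) :=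
  { k | ∀ i : Fin d, simRel n (y i) (j i) (k i) }

end Odometer

section Language

variable {d : ℕ} {A : Type} [Fintype A] [TopologicalSpace A] [DiscreteTopology A]
  [MeasurableSpace A] [BorelSpace A]

/-- `x|_S` belongs to the language of `X₀`: the pattern of `x` on `S` appears (somewhere) in
some point of `X₀`. -/
def InLang (X₀ : Set (Cfg d A)) (S : Set (Fin d → ℤ)) (x : Cfg d A) : Prop :=
  ∃ z ∈ X₀, ∃ m₀ : Fin d → ℤ, ∀ m ∈ S, x m = z (m + m₀)

/-- `n^{(x,y)}(j)`: the largest `n` such that `x` restricted to the dyadic tile `S_n(j,y)`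
belongs to the language of `X₀` (and `0` if there is no such `n`). -/
noncomputable def maxTileLevel (X₀ : Set (Cfg d A)) (x : Cfg d A) (y : OdoY d)
    (j : Fin d → ℤ) : ℕ :=
  sSup { n : ℕ | InLang X₀ (dyadicTile n j y) x }

end Language

section Aux

/-! ### Basic properties of `simRel` and `dyadicTile` -/

lemma simRel_refl (n : ℕ) (w : ℕ → Bool) (i : ℤ) : simRel n w i i := fun _ _ => rfl

lemma simRel_symm {n : ℕ} {w : ℕ → Bool} {i k : ℤ} (h : simRel n w i k) : simRel n w k i :=
  fun m hm => (h m hm).symm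

lemma simRel_trans {n : ℕ} {w : ℕ → Bool} {i k l : ℤ} (h : simRel n w i k)
    (h' : simRel n w k l) : simRel n w i l :=
  fun m hm => (h m hm).trans (h' m hm)

lemma simRel_mono {n n' : ℕ} (hn : n ≤ n') {w : ℕ → Bool} {i k : ℤ}
    (h : simRel n w i k) : simRel n' w i k :=
  fun m hm => h m (le_trans hn hm)

lemma dyadicTile_mono {d : ℕ} {n n' : ℕ} (hn : n ≤ n') (j : Fin d → ℤ) (y : OdoY d) :
    dyadicTile n j y ⊆ dyadicTile n' j y :=
  fun _ hk i => simRel_mono hn (hk i)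

lemma dyadicTile_congr {d : ℕ} {n : ℕ} {j k : Fin d → ℤ} {y : OdoY d}
    (h : ∀ i, simRel n (y i) (j i) (k i)) : dyadicTile n k y = dyadicTile n j y := by
  ext l
  constructor
  · intro hl i; exact simRel_trans (h i) (hl i)
  · intro hl i; exact simRel_trans (simRel_symm (h i)) (hl i)

/-! ### Regular odometer points -/

/-- A binary sequence is *regular* if it has infinitely many `false`s and infinitely many
`true`s. -/
def Pw (w : ℕ → Bool) : Prop :=
  {k | w k = false}.Infinite ∧ {k | w k = true}.Infinite

lemma Pw_of_agree {u v : ℕ → Bool} {n : ℕ} (h : ∀ m, n ≤ m → u m = v m) (hv : Pw v) :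
    Pw u := by
  constructor
  · refine Set.Infinite.mono (s := {k | v k = false} \ Set.Iio n) ?_ (hv.1.diff (Set.finite_Iio n))
    rintro k ⟨hk, hk'⟩
    simp only [Set.mem_Iio, not_lt] at hk'
    exact (h k hk').trans hk
  · refine Set.Infinite.mono (s := {k | v k = true} \ Set.Iio n) ?_ (hv.2.diff (Set.finite_Iio n))
    rintro k ⟨hk, hk'⟩
    simp only [Set.mem_Iio, not_lt] at hk'
    exact (h k hk').trans hk

lemma iota_agree {v : ℕ → Bool} {n₀ : ℕ} (h : v n₀ = false) :
    ∀ m, n₀ < m → iota v m = v m := by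
  intro m hm
  have hne : ¬ (∀ k < m, v k = true) := fun H => by rw [H n₀ hm] at h; exact Bool.noConfusion h
  unfold iota
  rw [decide_eq_false hne, Bool.xor_false]

lemma iotaInv_agree {v : ℕ → Bool} {n₀ : ℕ} (h : v n₀ = true) :
    ∀ m, n₀ < m → iotaInv v m = v m := by
  intro m hm
  have hne : ¬ (∀ k < m, v k = false) := fun H => by rw [H n₀ hm] at h; exact Bool.noConfusion h
  unfold iotaInv
  rw [decide_eq_false hne, Bool.xor_false]

lemma iter_iota (t : ℕ) (v : ℕ → Bool) (hv : Pw v) :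
    Pw (iota^[t] v) ∧ ∃ n, ∀ m, n ≤ m → iota^[t] v m = v m := by
  induction t with
  | zero => exact ⟨hv, 0, fun m _ => rfl⟩
  | succ t ih =>
    obtain ⟨hP, n, hn⟩ := ih
    obtain ⟨n₀, hn₀⟩ := hP.1.nonempty
    have hag : ∀ m, n₀ + 1 ≤ m → iota (iota^[t] v) m = iota^[t] v m :=
      fun m hm => iota_agree hn₀ m (by omega)
    rw [Function.iterate_succ_apply']
    refine ⟨Pw_of_agree hag hP, max n (n₀ + 1), fun m hm => ?_⟩
    rw [hag m (le_trans (le_max_right _ _) hm), hn m (le_trans (le_max_left _ _) hm)]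

lemma iter_iotaInv (t : ℕ) (v : ℕ → Bool) (hv : Pw v) :
    Pw (iotaInv^[t] v) ∧ ∃ n, ∀ m, n ≤ m → iotaInv^[t] v m = v m := by
  induction t with
  | zero => exact ⟨hv, 0, fun m _ => rfl⟩
  | succ t ih =>
    obtain ⟨hP, n, hn⟩ := ih
    obtain ⟨n₀, hn₀⟩ := hP.2.nonempty
    have hag : ∀ m, n₀ + 1 ≤ m → iotaInv (iotaInv^[t] v) m = iotaInv^[t] v m :=
      fun m hm => iotaInv_agree hn₀ m (by omega)
    rw [Function.iterate_succ_apply']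
    refine ⟨Pw_of_agree hag hP, max n (n₀ + 1), fun m hm => ?_⟩
    rw [hag m (le_trans (le_max_right _ _) hm), hn m (le_trans (le_max_left _ _) hm)]

lemma odoIter_agree {v : ℕ → Bool} (hv : Pw v) (i : ℤ) :
    ∃ n, ∀ m, n ≤ m → odoIter i v m = v m := by
  unfold odoIter
  split
  · exact (iter_iota _ v hv).2
  · exact (iter_iotaInv _ v hv).2

lemma simRel_exists {w : ℕ → Bool} (hw : Pw w) (i k : ℤ) : ∃ n, simRel n w i k := by
  obtain ⟨n₁, h₁⟩ := odoIter_agree hw i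
  obtain ⟨n₂, h₂⟩ := odoIter_agree hw k
  exact ⟨max n₁ n₂, fun m hm =>
    (h₁ m (le_trans (le_max_left _ _) hm)).trans (h₂ m (le_trans (le_max_right _ _) hm)).symm⟩

lemma tile_exhaust {d : ℕ} {y : OdoY d} (hy : ∀ i, Pw (y i)) (j k : Fin d → ℤ) :
    ∃ n, k ∈ dyadicTile n j y := by
  choose f hf using fun i => simRel_exists (hy i) (j i) (k i)
  exact ⟨Finset.univ.sup f, fun i =>
    simRel_mono (Finset.le_sup (Finset.mem_univ i)) (hf i)⟩

/-! ### The deterministic core of the tiling lemma -/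

variable {d : ℕ} {A : Type} [Fintype A] [TopologicalSpace A] [DiscreteTopology A]
  [MeasurableSpace A] [BorelSpace A]

lemma finite_levels (X₀ : Set (Cfg d A)) (hcl : IsClosed X₀)
    (hinv : ∀ n : Fin d → ℤ, ∀ x ∈ X₀, shift n x ∈ X₀)
    {x : Cfg d A} (hx : x ∉ X₀) {y : OdoY d} (hy : ∀ i, Pw (y i)) (j : Fin d → ℤ) :
    { n : ℕ | InLang X₀ (dyadicTile n j y) x }.Finite := by
  by_contra h
  have h' : { n : ℕ | InLang X₀ (dyadicTile n j y) x }.Infinite := h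
  have hex : ∀ t : ℕ, ∃ n ∈ { n : ℕ | InLang X₀ (dyadicTile n j y) x }, t < n :=
    fun t => h'.exists_gt t
  choose nf hmem hlt using hex
  have hmem' : ∀ t, InLang X₀ (dyadicTile (nf t) j y) x := hmem
  choose z hzX m₀ hm using hmem'
  set u : ℕ → Cfg d A := fun t => shift (m₀ t) (z t) with hu
  have huX : ∀ t, u t ∈ X₀ := fun t => hinv _ _ (hzX t)
  have hagree : ∀ t, ∀ m ∈ dyadicTile t j y, u t m = x m := by
    intro t m hmm
    have hmm' : m ∈ dyadicTile (nf t) j y := dyadicTile_mono (le_of_lt (hlt t)) j y hmm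
    have := hm t m hmm'
    simp only [hu, shift]
    rw [add_comm]
    exact this.symm
  have htend : Tendsto u atTop (𝓝 x) := by
    rw [tendsto_pi_nhds]
    intro m
    obtain ⟨T, hT⟩ := tile_exhaust hy j m
    refine Tendsto.congr' ?_ tendsto_const_nhds
    filter_upwards [eventually_ge_atTop T] with t ht
    exact (hagree t m (dyadicTile_mono ht j y hT)).symm
  exact hx (hcl.mem_of_tendsto htend (Eventually.of_forall huX))

lemma det_core (X₀ : Set (Cfg d A)) (hcl : IsClosed X₀)
    (hinv : ∀ n : Fin d → ℤ, ∀ x ∈ X₀, shift n x ∈ X₀)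
    {x : Cfg d A} (hx : x ∉ X₀) {y : OdoY d} (hy : ∀ i, Pw (y i)) (j : Fin d → ℤ) :
    { n : ℕ | InLang X₀ (dyadicTile n j y) x }.Finite ∧
    (∀ k ∈ dyadicTile (maxTileLevel X₀ x y j) j y,
      dyadicTile (maxTileLevel X₀ x y k) k y = dyadicTile (maxTileLevel X₀ x y j) j y) ∧
    (0 < maxTileLevel X₀ x y j → InLang X₀ (dyadicTile (maxTileLevel X₀ x y j) j y) x) ∧
    ¬ InLang X₀ (dyadicTile (maxTileLevel X₀ x y j + 1) j y) x := by
  have hfin : ∀ j' : Fin d → ℤ, { n : ℕ | InLang X₀ (dyadicTile n j' y) x }.Finite :=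
    fun j' => finite_levels X₀ hcl hinv hx hy j'
  set N : Set ℕ := { n : ℕ | InLang X₀ (dyadicTile n j y) x } with hN
  set M : ℕ := maxTileLevel X₀ x y j with hM
  have hMs : M = sSup N := rfl
  have hbdd : BddAbove N := (hfin j).bddAbove
  have hmax_mem : 0 < M → M ∈ N := by
    intro hMpos
    have hne : N.Nonempty := by
      by_contra hne
      rw [Set.not_nonempty_iff_eq_empty] at hne
      rw [hMs, hne, csSup_empty] at hMpos
      exact absurd hMpos (by simp)
    rw [hMs]
    exact Nat.sSup_mem hne hbdd
  have hnot_above : ∀ n, M < n → n ∉ N := by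
    intro n hn hnN
    have := le_csSup hbdd hnN
    rw [← hMs] at this
    omega
  refine ⟨hfin j, ?_, fun h => hmax_mem h, ?_⟩
  · intro k hk
    have htiles : ∀ n, M ≤ n → dyadicTile n k y = dyadicTile n j y :=
      fun n hn => dyadicTile_congr (fun i => simRel_mono hn (hk i))
    rcases Nat.eq_zero_or_pos M with hM0 | hMpos
    · have hall : ∀ n, dyadicTile n k y = dyadicTile n j y :=
        fun n => htiles n (by omega)
      have hNk : { n : ℕ | InLang X₀ (dyadicTile n k y) x } = N := by
        ext n; rw [hN]; simp only [Set.mem_setOf_eq, hall n]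
      have : maxTileLevel X₀ x y k = M := by
        rw [hMs]; unfold maxTileLevel; rw [hNk]
      rw [this, hall M]
    · have hMNk : M ∈ { n : ℕ | InLang X₀ (dyadicTile n k y) x } := by
        simp only [Set.mem_setOf_eq, htiles M le_rfl]
        exact hmax_mem hMpos
      have hub : ∀ n ∈ { n : ℕ | InLang X₀ (dyadicTile n k y) x }, n ≤ M := by
        intro n hn
        by_contra hcon
        push_neg at hcon
        have : n ∈ N := by
          rw [hN]
          simpa only [Set.mem_setOf_eq, htiles n (le_of_lt hcon)] using hn
        exact hnot_above n hcon this
      have hMk : maxTileLevel X₀ x y k = M := by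
        unfold maxTileLevel
        exact le_antisymm (csSup_le ⟨M, hMNk⟩ hub) (le_csSup ⟨M, hub⟩ hMNk)
      rw [hMk, htiles M le_rfl]
  · intro hIn
    exact hnot_above (M + 1) (by omega) hIn

/-! ### Measure-theoretic input -/

lemma tail_const_null {d : ℕ} (ν : Measure (OdoY d))
    (hν : ∀ (F : Finset (Fin d × ℕ)) (b : Fin d × ℕ → Bool),
      ν { y : OdoY d | ∀ p ∈ F, y p.1 p.2 = b p } = (1 / 2 : ℝ≥0∞) ^ F.card)
    (i : Fin d) (n : ℕ) (c : Bool) :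
    ν { y : OdoY d | ∀ k, n ≤ k → y i k = c } = 0 := by
  have hle : ∀ m : ℕ, ν { y : OdoY d | ∀ k, n ≤ k → y i k = c } ≤ (1 / 2 : ℝ≥0∞) ^ (m + 1) := by
    intro m
    set F : Finset (Fin d × ℕ) := (Finset.range (m + 1)).image (fun t => (i, n + t)) with hF
    have hcard : F.card = m + 1 := by
      rw [hF, Finset.card_image_of_injective _ (fun a b hab => by
        have := congrArg Prod.snd hab
        simp only at this
        omega), Finset.card_range]
    have hsub : { y : OdoY d | ∀ k, n ≤ k → y i k = c } ⊆
        { y : OdoY d | ∀ p ∈ F, y p.1 p.2 = (fun _ => c) p } := by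
      intro y hy p hp
      simp only [hF, Finset.mem_image, Finset.mem_range] at hp
      obtain ⟨t, _, rfl⟩ := hp
      exact hy (n + t) (Nat.le_add_right n t)
    calc ν { y : OdoY d | ∀ k, n ≤ k → y i k = c }
        ≤ ν { y : OdoY d | ∀ p ∈ F, y p.1 p.2 = (fun _ => c) p } := measure_mono hsub
      _ = (1 / 2 : ℝ≥0∞) ^ F.card := hν F (fun _ => c)
      _ = (1 / 2 : ℝ≥0∞) ^ (m + 1) := by rw [hcard]
  have htend : Tendsto (fun m : ℕ => (1 / 2 : ℝ≥0∞) ^ (m + 1)) atTop (𝓝 0) := by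
    have h := ENNReal.tendsto_pow_atTop_nhds_zero_of_lt_one
      (by norm_num : (1 / 2 : ℝ≥0∞) < 1)
    exact h.comp (tendsto_add_atTop_nat 1)
  have hc : Tendsto (fun _ : ℕ => ν { y : OdoY d | ∀ k, n ≤ k → y i k = c }) atTop
      (𝓝 (ν { y : OdoY d | ∀ k, n ≤ k → y i k = c })) := tendsto_const_nhds
  have := le_of_tendsto_of_tendsto' hc htend hle
  exact le_antisymm this (zero_le')

lemma ae_regular {d : ℕ} (ν : Measure (OdoY d))
    (hν : ∀ (F : Finset (Fin d × ℕ)) (b : Fin d × ℕ → Bool),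
      ν { y : OdoY d | ∀ p ∈ F, y p.1 p.2 = b p } = (1 / 2 : ℝ≥0∞) ^ F.card) :
    ∀ᵐ y ∂ν, ∀ i : Fin d, Pw (y i) := by
  rw [ae_iff]
  have hnull : ν (⋃ i : Fin d, ⋃ n : ℕ, ⋃ c : Bool,
      { y : OdoY d | ∀ k, n ≤ k → y i k = c }) = 0 :=
    measure_iUnion_null fun i => measure_iUnion_null fun n => measure_iUnion_null fun c =>
      tail_const_null ν hν i n c
  refine measure_mono_null ?_ hnull
  intro y hy
  simp only [Set.mem_setOf_eq, not_forall] at hy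
  obtain ⟨i, hi⟩ := hy
  rw [Pw, not_and_or] at hi
  simp only [Set.mem_iUnion]
  rcases hi with hi | hi
  · rw [Set.not_infinite] at hi
    obtain ⟨n₀, hn₀⟩ := hi.bddAbove
    refine ⟨i, n₀ + 1, true, fun k hk => ?_⟩
    by_contra hkc
    have : k ∈ {k | y i k = false} := by
      simp only [Set.mem_setOf_eq]
      cases h : y i k
      · rfl
      · exact absurd h hkc
    have := hn₀ this
    omega
  · rw [Set.not_infinite] at hi
    obtain ⟨n₀, hn₀⟩ := hi.bddAbove
    refine ⟨i, n₀ + 1, false, fun k hk => ?_⟩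
    by_contra hkc
    have : k ∈ {k | y i k = true} := by
      simp only [Set.mem_setOf_eq]
      cases h : y i k
      · exact absurd h hkc
      · rfl
    have := hn₀ this
    omega

end Aux

/-- **Dyadic Tiling Lemma.** Let `X₀` be a proper subshift, `μ` an ergodic
shift-invariant measure with `μ(X₀) = 0`, `ν` the uniform Bernoulli measure on the dyadic
`ℤ^d`-odometer `Y`, and `μ̄` an ergodic joining of `μ` and `ν`. Then for `μ̄`-a.e. `(x,y)` and
every `j ∈ ℤ^d`: the set of levels `n` with `x|_{S_n(j,y)} ∈ L(X₀)` is finite; the maximal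
dyadic tiles form a partition of `ℤ^d`; each tile of positive level carries a pattern in the
language of `X₀`; and the next larger dyadic tile does not. -/
theorem statement7 (d : ℕ) (hd : 1 ≤ d) (A : Type) [Fintype A] [TopologicalSpace A]
    [DiscreteTopology A] [MeasurableSpace A] [BorelSpace A]
    (X₀ : Set (Cfg d A)) (hsub : IsSubshift X₀) (hproper : X₀ ≠ Set.univ)
    (μ : Measure (Cfg d A)) (hμp : IsProbabilityMeasure μ) (hμinv : Invariant μ)
    (hμerg : ErgodicInv μ) (hμ0 : μ X₀ = 0)
    (ν : Measure (OdoY d)) (hνp : IsProbabilityMeasure ν)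
    (hν : ∀ (F : Finset (Fin d × ℕ)) (b : Fin d × ℕ → Bool),
      ν { y : OdoY d | ∀ p ∈ F, y p.1 p.2 = b p } = (1 / 2 : ℝ≥0∞) ^ F.card)
    (μbar : Measure (Cfg d A × OdoY d)) (hbarp : IsProbabilityMeasure μbar)
    (hbarinv : ∀ j : Fin d → ℤ,
      Measure.map (fun p : Cfg d A × OdoY d => (shift j p.1, odoAct j p.2)) μbar = μbar)
    (hbarerg : ∀ s : Set (Cfg d A × OdoY d), MeasurableSet s →
      (∀ j : Fin d → ℤ,
        (fun p : Cfg d A × OdoY d => (shift j p.1, odoAct j p.2)) ⁻¹' s = s) →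
      μbar s = 0 ∨ μbar s = 1)
    (hfst : Measure.map Prod.fst μbar = μ) (hsnd : Measure.map Prod.snd μbar = ν) :
    ∀ᵐ p ∂μbar, ∀ j : Fin d → ℤ,
      { n : ℕ | InLang X₀ (dyadicTile n j p.2) p.1 }.Finite ∧
      (∀ k ∈ dyadicTile (maxTileLevel X₀ p.1 p.2 j) j p.2,
        dyadicTile (maxTileLevel X₀ p.1 p.2 k) k p.2 =
          dyadicTile (maxTileLevel X₀ p.1 p.2 j) j p.2) ∧
      (0 < maxTileLevel X₀ p.1 p.2 j →
        InLang X₀ (dyadicTile (maxTileLevel X₀ p.1 p.2 j) j p.2) p.1) ∧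
      ¬ InLang X₀ (dyadicTile (maxTileLevel X₀ p.1 p.2 j + 1) j p.2) p.1 := by
  have h1 : ∀ᵐ x ∂μ, x ∉ X₀ := by
    rw [ae_iff]
    simpa [not_not] using hμ0
  have h1' : ∀ᵐ p ∂μbar, p.1 ∉ X₀ := by
    rw [← hfst] at h1
    exact ae_of_ae_map measurable_fst.aemeasurable h1
  have h2 : ∀ᵐ p ∂μbar, ∀ i : Fin d, Pw (p.2 i) := by
    have h := ae_regular ν hν
    rw [← hsnd] at h
    exact ae_of_ae_map measurable_snd.aemeasurable h
  filter_upwards [h1', h2] with p hp1 hp2 j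
  exact det_core X₀ hsub.2.1 hsub.2.2 hp1 hp2 j

end Freezing
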